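/- Let (ρ,u) and (σ,v) be twisted coactions of H^0 on a unital C*-algebra A. Then the following are equivalent: (1) (ρ,u) and (σ,v) are exterior equivalent, i.e. there is a unitary w ∈ A⊗H^0 with σ = Ad(w)∘ρ and v = (w⊗1^0)(ρ⊗id)(w)·u·(id⊗Δ^0)(w*); (2) (ρ,u) and (σ,v) are strongly Morita equivalent via a twisted coaction λ of H^0 on the A–A equivalence bimodule A itself (with _A⟨a,b⟩ = ab* and ⟨a,b⟩_A = a*b), where λ maps A into the (A⊗H^0)–(A⊗H^0) equivalence bimodule A⊗H^0. -/

import Mathlib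

open scoped TensorProduct
open Filter Topology
set_option maxHeartbeats 1000000
set_option linter.unusedSectionVars false
set_option synthInstance.maxHeartbeats 400000
noncomputable section
namespace SMEPaper
universe u

/-! ### Generalities on tensor products with a finite dimensional C*-algebra -/

/-- Contraction of the right tensor factor against a linear functional:
`appRight f (m ⊗ c) = f c • m`. -/
def appRight {M C : Type*} [AddCommGroup M] [Module ℂ M] [AddCommGroup C] [Module ℂ C]
    (f : C →ₗ[ℂ] ℂ) : M ⊗[ℂ] C →ₗ[ℂ] M :=
  (TensorProduct.rid ℂ M).toLinearMap ∘ₗ TensorProduct.map LinearMap.id f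

/-- The `i`-th coordinate, with respect to the canonical finite basis of `C`, of an
element of `M ⊗[ℂ] C`. -/
def tcoord {M C : Type*} [AddCommGroup M] [Module ℂ M] [AddCommGroup C] [Module ℂ C]
    [FiniteDimensional ℂ C] (i : Fin (Module.finrank ℂ C)) : M ⊗[ℂ] C →ₗ[ℂ] M :=
  appRight ((Module.finBasis ℂ C).coord i)

/-- The star operation on `M ⊗[ℂ] C` (`C` finite dimensional) where the star operation on the
first factor is supplied as a function: on simple tensors, `m ⊗ c ↦ sM m ⊗ star c`. -/
def tstarWith {M C : Type*} [AddCommGroup M] [Module ℂ M] [Ring C] [Algebra ℂ C]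
    [StarRing C] [FiniteDimensional ℂ C] (sM : M → M) (t : M ⊗[ℂ] C) : M ⊗[ℂ] C :=
  ∑ i, sM (tcoord i t) ⊗ₜ star (Module.finBasis ℂ C i)

/-- Combination of an operation on the first factors and an operation on the second (finite
dimensional) factors to an operation on tensor products: on simple tensors,
`tmix op cop (p ⊗ c) (q ⊗ d) = op p q ⊗ cop c d`. -/
def tmix {P Q R C : Type*} [AddCommGroup P] [Module ℂ P] [AddCommGroup Q] [Module ℂ Q]
    [AddCommGroup R] [Module ℂ R] [Ring C] [Algebra ℂ C] [FiniteDimensional ℂ C]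
    (op : P → Q → R) (cop : C → C → C) (s : P ⊗[ℂ] C) (t : Q ⊗[ℂ] C) : R ⊗[ℂ] C :=
  ∑ i, ∑ j,
    op (tcoord i s) (tcoord j t) ⊗ₜ cop (Module.finBasis ℂ C i) (Module.finBasis ℂ C j)

/-- The operation on tensor products induced by an operation on the first factors (and
multiplication in the second): `tact op (p ⊗ c) (q ⊗ d) = op p q ⊗ (c * d)`. -/
def tact {P Q R C : Type*} [AddCommGroup P] [Module ℂ P] [AddCommGroup Q] [Module ℂ Q]
    [AddCommGroup R] [Module ℂ R] [Ring C] [Algebra ℂ C] [FiniteDimensional ℂ C]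
    (op : P → Q → R) : P ⊗[ℂ] C → Q ⊗[ℂ] C → R ⊗[ℂ] C :=
  tmix op (· * ·)

/-- The left inner product on `X ⊗ C` induced by a left (`A`-valued) inner product on `X`:
`(x ⊗ c), (y ⊗ d) ↦ inn x y ⊗ (c * star d)`. -/
def tinnL {X A C : Type*} [AddCommGroup X] [Module ℂ X] [AddCommGroup A] [Module ℂ A]
    [Ring C] [Algebra ℂ C] [StarRing C] [FiniteDimensional ℂ C]
    (inn : X → X → A) : X ⊗[ℂ] C → X ⊗[ℂ] C → A ⊗[ℂ] C :=
  tmix inn (fun c d => c * star d)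

/-- The right inner product on `X ⊗ C` induced by a right (`B`-valued) inner product on `X`:
`(x ⊗ c), (y ⊗ d) ↦ inn x y ⊗ (star c * d)`. -/
def tinnR {X B C : Type*} [AddCommGroup X] [Module ℂ X] [AddCommGroup B] [Module ℂ B]
    [Ring C] [Algebra ℂ C] [StarRing C] [FiniteDimensional ℂ C]
    (inn : X → X → B) : X ⊗[ℂ] C → X ⊗[ℂ] C → B ⊗[ℂ] C :=
  tmix inn (fun c d => star c * d)

/-! ### Finite dimensional C*-Hopf algebras -/

/-- The data and axioms of a finite dimensional C*-Hopf algebra structure on the finite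
dimensional C*-algebra `H0`: a comultiplication, counit and antipode satisfying the Hopf
algebra axioms, compatibly with the ⋆-structure. -/
structure HopfAlgData (H0 : Type u) [Ring H0] [Algebra ℂ H0] [StarRing H0]
    [StarModule ℂ H0] [FiniteDimensional ℂ H0] where
  comul : H0 →ₐ[ℂ] H0 ⊗[ℂ] H0
  counit : H0 →ₐ[ℂ] ℂ
  antipode : H0 →ₗ[ℂ] H0
  coassoc : ∀ h, TensorProduct.map comul.toLinearMap LinearMap.id (comul h)
      = (TensorProduct.assoc ℂ H0 H0 H0).symm
          (TensorProduct.map LinearMap.id comul.toLinearMap (comul h))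
  counit_left : ∀ h,
      (TensorProduct.lid ℂ H0) (TensorProduct.map counit.toLinearMap LinearMap.id (comul h)) = h
  counit_right : ∀ h, appRight counit.toLinearMap (comul h) = h
  antipode_left : ∀ (h : H0) (n : ℕ) (h1 h2 : Fin n → H0),
      comul h = ∑ i, h1 i ⊗ₜ h2 i → ∑ i, antipode (h1 i) * h2 i = counit h • 1
  antipode_right : ∀ (h : H0) (n : ℕ) (h1 h2 : Fin n → H0),
      comul h = ∑ i, h1 i ⊗ₜ h2 i → ∑ i, h1 i * antipode (h2 i) = counit h • 1
  comul_star : ∀ h, comul (star h) = tstarWith star (comul h)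
  counit_star : ∀ h, counit (star h) = starRingEnd ℂ (counit h)

/-! ### Coactions on C*-algebras -/

section Coaction
variable {H0 : Type u} [Ring H0] [Algebra ℂ H0] [StarRing H0] [StarModule ℂ H0]
  [FiniteDimensional ℂ H0]
variable {A B X : Type u} [Ring A] [Algebra ℂ A] [StarRing A]
  [Ring B] [Algebra ℂ B] [StarRing B] [AddCommGroup X] [Module ℂ X]

/-- `ρ : A → A ⊗ H0` is a weak coaction of `H0` (with counit `ε0`) on `A`:
a unital ⋆-homomorphism with `(id ⊗ ε0) ∘ ρ = id`. -/
structure IsWeakCoaction (ε0 : H0 →ₗ[ℂ] ℂ) (ρ : A →ₗ[ℂ] A ⊗[ℂ] H0) : Prop where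
  map_one : ρ 1 = 1
  map_mul : ∀ a b, ρ (a * b) = ρ a * ρ b
  map_star : ∀ a, ρ (star a) = tstarWith star (ρ a)
  counital : ∀ a, appRight ε0 (ρ a) = a

/-- `ρ : A → A ⊗ H0` is a coaction of `H0` (with comultiplication `Δ0`, counit `ε0`) on `A`:
a weak coaction with `(ρ ⊗ id) ∘ ρ = (id ⊗ Δ0) ∘ ρ`. -/
structure IsCoaction (Δ0 : H0 →ₗ[ℂ] H0 ⊗[ℂ] H0) (ε0 : H0 →ₗ[ℂ] ℂ)
    (ρ : A →ₗ[ℂ] A ⊗[ℂ] H0) extends IsWeakCoaction ε0 ρ : Prop where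
  coassoc : ∀ a, TensorProduct.map ρ LinearMap.id (ρ a)
      = (TensorProduct.assoc ℂ A H0 H0).symm (TensorProduct.map LinearMap.id Δ0 (ρ a))

/-- The pair `(ρ, u)` is a twisted coaction of `H0` on `A`. -/
structure IsTwistedCoaction (Δ0 : H0 →ₗ[ℂ] H0 ⊗[ℂ] H0) (ε0 : H0 →ₗ[ℂ] ℂ)
    (ρ : A →ₗ[ℂ] A ⊗[ℂ] H0) (u : (A ⊗[ℂ] H0) ⊗[ℂ] H0)
    extends IsWeakCoaction ε0 ρ : Prop where
  unitary_left : u * tstarWith (tstarWith star) u = 1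
  unitary_right : tstarWith (tstarWith star) u * u = 1
  twisted_coassoc : ∀ a, TensorProduct.map ρ LinearMap.id (ρ a)
      = u * ((TensorProduct.assoc ℂ A H0 H0).symm (TensorProduct.map LinearMap.id Δ0 (ρ a)))
        * tstarWith (tstarWith star) u
  cocycle : (u ⊗ₜ (1 : H0))
        * TensorProduct.map ((TensorProduct.assoc ℂ A H0 H0).symm.toLinearMap
            ∘ₗ TensorProduct.map LinearMap.id Δ0) LinearMap.id u
      = TensorProduct.map (TensorProduct.map ρ LinearMap.id) LinearMap.id u
        * (TensorProduct.assoc ℂ (A ⊗[ℂ] H0) H0 H0).symm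
            (TensorProduct.map LinearMap.id Δ0 u)
  counit_mid : ∀ h : Module.Dual ℂ H0, appRight h (appRight ε0 u) = h 1 • (1 : A)
  counit_out : ∀ h : Module.Dual ℂ H0, appRight ε0 (appRight h u) = h 1 • (1 : A)

/-- The trivial coaction `a ↦ a ⊗ 1` of `H0` on `A`. -/
def trivialCoaction (H0 : Type u) [Ring H0] [Algebra ℂ H0] (A : Type u) [Ring A]
    [Algebra ℂ A] : A →ₗ[ℂ] A ⊗[ℂ] H0 :=
  (TensorProduct.mk ℂ A H0).flip 1

end Coaction

/-! ### Hilbert bimodules -/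

/-- A (pre-)Hilbert `A`–`B` bimodule structure on `X`: a bimodule with a left `A`-valued and a
right `B`-valued inner product, compatible with the module actions, with the appropriate
(conjugate-)linearity, symmetry, positivity and definiteness properties. -/
structure Bimod (A B X : Type u) [Ring A] [Algebra ℂ A] [StarRing A]
    [Ring B] [Algebra ℂ B] [StarRing B] [AddCommGroup X] [Module ℂ X] where
  ls : A → X → X
  rs : X → B → X
  linn : X → X → A
  rinn : X → X → B
  ls_one : ∀ x, ls 1 x = x
  ls_mul : ∀ a a' x, ls (a * a') x = ls a (ls a' x)
  ls_add : ∀ a a' x, ls (a + a') x = ls a x + ls a' x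
  ls_add' : ∀ a x y, ls a (x + y) = ls a x + ls a y
  ls_smul : ∀ (c : ℂ) a x, ls (c • a) x = c • ls a x
  ls_smul' : ∀ (c : ℂ) a x, ls a (c • x) = c • ls a x
  rs_one : ∀ x, rs x 1 = x
  rs_mul : ∀ x b b', rs x (b * b') = rs (rs x b) b'
  rs_add : ∀ x b b', rs x (b + b') = rs x b + rs x b'
  rs_add' : ∀ x y b, rs (x + y) b = rs x b + rs y b
  rs_smul : ∀ (c : ℂ) x b, rs x (c • b) = c • rs x b
  rs_smul' : ∀ (c : ℂ) x b, rs (c • x) b = c • rs x b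
  ls_rs : ∀ a x b, ls a (rs x b) = rs (ls a x) b
  linn_add_left : ∀ x y z, linn (x + y) z = linn x z + linn y z
  linn_add_right : ∀ x y z, linn x (y + z) = linn x y + linn x z
  rinn_add_left : ∀ x y z, rinn (x + y) z = rinn x z + rinn y z
  rinn_add_right : ∀ x y z, rinn x (y + z) = rinn x y + rinn x z
  linn_smul_left : ∀ (c : ℂ) x y, linn (c • x) y = c • linn x y
  linn_smul_right : ∀ (c : ℂ) x y, linn x (c • y) = starRingEnd ℂ c • linn x y
  rinn_smul_left : ∀ (c : ℂ) x y, rinn (c • x) y = starRingEnd ℂ c • rinn x y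
  rinn_smul_right : ∀ (c : ℂ) x y, rinn x (c • y) = c • rinn x y
  linn_star : ∀ x y, star (linn x y) = linn y x
  rinn_star : ∀ x y, star (rinn x y) = rinn y x
  linn_ls : ∀ a x y, linn (ls a x) y = a * linn x y
  rinn_rs : ∀ x y b, rinn x (rs y b) = rinn x y * b
  linn_rs : ∀ x y b, linn (rs x b) y = linn x (rs y (star b))
  rinn_ls : ∀ a x y, rinn (ls a x) y = rinn x (ls (star a) y)
  linn_pos : ∀ x, ∃ a, linn x x = star a * a
  rinn_pos : ∀ x, ∃ b, rinn x x = star b * b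
  rinn_def : ∀ x, rinn x x = 0 → x = 0

section BimodDefs
variable {A B X : Type u} [Ring A] [Algebra ℂ A] [StarRing A]
    [Ring B] [Algebra ℂ B] [StarRing B] [AddCommGroup X] [Module ℂ X]

/-- A Hilbert bimodule is of finite type if it admits a finite right basis and a finite left
basis in the sense of Kajiwara–Watatani. -/
def Bimod.FiniteType (bm : Bimod A B X) : Prop :=
  (∃ (n : ℕ) (u : Fin n → X), ∀ x, ∑ i, bm.rs (u i) (bm.rinn (u i) x) = x) ∧
  (∃ (m : ℕ) (v : Fin m → X), ∀ x, ∑ j, bm.ls (bm.linn x (v j)) (v j) = x)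

/-- An equivalence bimodule: both inner products are full and the associativity condition
`_A⟨x,y⟩ • z = x • ⟨y,z⟩_B` holds. -/
def Bimod.IsEquivalence (bm : Bimod A B X) : Prop :=
  (∀ x y z, bm.ls (bm.linn x y) z = bm.rs x (bm.rinn y z)) ∧
  Submodule.span ℂ (Set.range fun p : X × X => bm.linn p.1 p.2) = ⊤ ∧
  Submodule.span ℂ (Set.range fun p : X × X => bm.rinn p.1 p.2) = ⊤

end BimodDefs

/-! ### Coactions on Hilbert bimodules, covariant systems, strong Morita equivalence -/

section BimodCoaction
variable {H0 : Type u} [Ring H0] [Algebra ℂ H0] [StarRing H0] [StarModule ℂ H0]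
  [FiniteDimensional ℂ H0]
variable {A B X : Type u} [Ring A] [Algebra ℂ A] [StarRing A]
  [Ring B] [Algebra ℂ B] [StarRing B] [AddCommGroup X] [Module ℂ X]

/-- `(A, B, X, ρ, σ, λ, H0)` is a weak covariant system: `lam` is a weak coaction of `H0` on
the Hilbert `A`–`B` bimodule `X` with respect to `(A, B, ρ, σ)`. -/
structure IsWeakCoactionBimod (ε0 : H0 →ₗ[ℂ] ℂ) (bm : Bimod A B X)
    (ρ : A →ₗ[ℂ] A ⊗[ℂ] H0) (σ : B →ₗ[ℂ] B ⊗[ℂ] H0)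
    (lam : X →ₗ[ℂ] X ⊗[ℂ] H0) : Prop where
  ls_compat : ∀ a x, lam (bm.ls a x) = tact bm.ls (ρ a) (lam x)
  rs_compat : ∀ x b, lam (bm.rs x b) = tact bm.rs (lam x) (σ b)
  linn_compat : ∀ x y, ρ (bm.linn x y) = tinnL bm.linn (lam x) (lam y)
  rinn_compat : ∀ x y, σ (bm.rinn x y) = tinnR bm.rinn (lam x) (lam y)
  counital : ∀ x, appRight ε0 (lam x) = x

/-- `(A, B, X, ρ, σ, λ, H0)` is a covariant system: `lam` is a coaction of `H0` on the
Hilbert `A`–`B` bimodule `X` with respect to `(A, B, ρ, σ)`. -/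
structure IsCoactionBimod (Δ0 : H0 →ₗ[ℂ] H0 ⊗[ℂ] H0) (ε0 : H0 →ₗ[ℂ] ℂ) (bm : Bimod A B X)
    (ρ : A →ₗ[ℂ] A ⊗[ℂ] H0) (σ : B →ₗ[ℂ] B ⊗[ℂ] H0) (lam : X →ₗ[ℂ] X ⊗[ℂ] H0)
    extends IsWeakCoactionBimod ε0 bm ρ σ lam : Prop where
  coassoc : ∀ x, TensorProduct.map lam LinearMap.id (lam x)
      = (TensorProduct.assoc ℂ X H0 H0).symm (TensorProduct.map LinearMap.id Δ0 (lam x))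

/-- `(A, B, X, ρ, u, σ, v, λ, H0)` is a twisted covariant system: `lam` is a twisted coaction
of `H0` on the Hilbert `A`–`B` bimodule `X` with respect to `(A, B, ρ, u, σ, v)`. -/
structure IsTwistedCoactionBimod (Δ0 : H0 →ₗ[ℂ] H0 ⊗[ℂ] H0) (ε0 : H0 →ₗ[ℂ] ℂ)
    (bm : Bimod A B X) (ρ : A →ₗ[ℂ] A ⊗[ℂ] H0) (u : (A ⊗[ℂ] H0) ⊗[ℂ] H0)
    (σ : B →ₗ[ℂ] B ⊗[ℂ] H0) (v : (B ⊗[ℂ] H0) ⊗[ℂ] H0) (lam : X →ₗ[ℂ] X ⊗[ℂ] H0)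
    extends IsWeakCoactionBimod ε0 bm ρ σ lam : Prop where
  twisted : ∀ x, TensorProduct.map lam LinearMap.id (lam x)
      = tact (tact bm.rs)
          (tact (tact bm.ls) u
            ((TensorProduct.assoc ℂ X H0 H0).symm (TensorProduct.map LinearMap.id Δ0 (lam x))))
          (tstarWith (tstarWith star) v)

/-- Two weak coactions `ρ` (on `A`) and `σ` (on `B`) of `H0` are strongly Morita equivalent
if there are an `A`–`B` equivalence bimodule `X` and a weak coaction of `H0` on `X` with
respect to `(A, B, ρ, σ)`. -/
def WeakSME (ε0 : H0 →ₗ[ℂ] ℂ) (ρ : A →ₗ[ℂ] A ⊗[ℂ] H0) (σ : B →ₗ[ℂ] B ⊗[ℂ] H0) : Prop :=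
  ∃ (X : Type u) (_ : AddCommGroup X) (_ : Module ℂ X) (bm : Bimod A B X),
    bm.IsEquivalence ∧ ∃ lam : X →ₗ[ℂ] X ⊗[ℂ] H0, IsWeakCoactionBimod ε0 bm ρ σ lam

/-- Two coactions `ρ` (on `A`) and `σ` (on `B`) of `H0` are strongly Morita equivalent if
there are an `A`–`B` equivalence bimodule `X` and a coaction of `H0` on `X` with respect to
`(A, B, ρ, σ)`. -/
def CoactSME (Δ0 : H0 →ₗ[ℂ] H0 ⊗[ℂ] H0) (ε0 : H0 →ₗ[ℂ] ℂ)
    (ρ : A →ₗ[ℂ] A ⊗[ℂ] H0) (σ : B →ₗ[ℂ] B ⊗[ℂ] H0) : Prop :=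
  ∃ (X : Type u) (_ : AddCommGroup X) (_ : Module ℂ X) (bm : Bimod A B X),
    bm.IsEquivalence ∧ ∃ lam : X →ₗ[ℂ] X ⊗[ℂ] H0, IsCoactionBimod Δ0 ε0 bm ρ σ lam

/-- Two twisted coactions `(ρ, u)` (on `A`) and `(σ, v)` (on `B`) of `H0` are strongly Morita
equivalent if there are an `A`–`B` equivalence bimodule `X` and a twisted coaction of `H0` on
`X` with respect to `(A, B, ρ, u, σ, v)`. -/
def TwistedSME (Δ0 : H0 →ₗ[ℂ] H0 ⊗[ℂ] H0) (ε0 : H0 →ₗ[ℂ] ℂ)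
    (ρ : A →ₗ[ℂ] A ⊗[ℂ] H0) (u : (A ⊗[ℂ] H0) ⊗[ℂ] H0)
    (σ : B →ₗ[ℂ] B ⊗[ℂ] H0) (v : (B ⊗[ℂ] H0) ⊗[ℂ] H0) : Prop :=
  ∃ (X : Type u) (_ : AddCommGroup X) (_ : Module ℂ X) (bm : Bimod A B X),
    bm.IsEquivalence ∧
      ∃ lam : X →ₗ[ℂ] X ⊗[ℂ] H0, IsTwistedCoactionBimod Δ0 ε0 bm ρ u σ v lam

end BimodCoaction
/-! ### The identity equivalence bimodule of a unital C*-algebra -/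

/-- The canonical `A`–`A` equivalence bimodule structure on `A` itself, with
`_A⟨a,b⟩ = a b*` and `⟨a,b⟩_A = a* b`. -/
def idBimod (A : Type u) [CStarAlgebra A] [StarModule ℂ A] : Bimod A A A where
  ls a x := a * x
  rs x b := x * b
  linn x y := x * star y
  rinn x y := star x * y
  ls_one := one_mul
  ls_mul a a' x := mul_assoc a a' x
  ls_add a a' x := add_mul a a' x
  ls_add' a x y := mul_add a x y
  ls_smul c a x := smul_mul_assoc c a x
  ls_smul' c a x := mul_smul_comm c a x
  rs_one := mul_one
  rs_mul x b b' := (mul_assoc x b b').symm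
  rs_add x b b' := mul_add x b b'
  rs_add' x y b := add_mul x y b
  rs_smul c x b := mul_smul_comm c x b
  rs_smul' c x b := smul_mul_assoc c x b
  ls_rs a x b := (mul_assoc a x b).symm
  linn_add_left x y z := add_mul x y (star z)
  linn_add_right x y z := by simp [star_add, mul_add]
  rinn_add_left x y z := by simp [star_add, add_mul]
  rinn_add_right x y z := mul_add (star x) y z
  linn_smul_left c x y := smul_mul_assoc c x (star y)
  linn_smul_right c x y := by
    show x * star (c • y) = starRingEnd ℂ c • (x * star y)
    rw [star_smul, mul_smul_comm, starRingEnd_apply]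
  rinn_smul_left c x y := by
    show star (c • x) * y = starRingEnd ℂ c • (star x * y)
    rw [star_smul, smul_mul_assoc, starRingEnd_apply]
  rinn_smul_right c x y := mul_smul_comm c (star x) y
  linn_star x y := by simp [star_mul, star_star]
  rinn_star x y := by simp [star_mul, star_star]
  linn_ls a x y := mul_assoc a x (star y)
  rinn_rs x y b := (mul_assoc (star x) y b).symm
  linn_rs x y b := by simp [star_mul, star_star, mul_assoc]
  rinn_ls a x y := by simp [star_mul, star_star, mul_assoc]
  linn_pos x := ⟨star x, by rw [star_star]⟩
  rinn_pos x := ⟨x, rfl⟩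
  rinn_def x h := by
    have h' : star x * x = 0 := h
    have h1 : ‖x‖ * ‖x‖ = 0 := by
      rw [← CStarRing.norm_star_mul_self (x := x), h', norm_zero]
    exact norm_eq_zero.mp (mul_self_eq_zero.mp h1)

section ExtEquiv
variable {H0 : Type u} [Ring H0] [Algebra ℂ H0] [StarRing H0] [StarModule ℂ H0]
  [FiniteDimensional ℂ H0]
variable {A : Type u} [Ring A] [Algebra ℂ A] [StarRing A]

/-- Two weak coactions `ρ, σ` of `H0` on `A` are exterior equivalent: there is a unitary
`w ∈ A ⊗ H0` with `σ = Ad(w) ∘ ρ` and `(id ⊗ ε0)(w) = 1`. -/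
def ExtEquiv (ε0 : H0 →ₗ[ℂ] ℂ) (ρ σ : A →ₗ[ℂ] A ⊗[ℂ] H0) : Prop :=
  ∃ w : A ⊗[ℂ] H0, w * tstarWith star w = 1 ∧ tstarWith star w * w = 1 ∧
    (∀ a, σ a = w * ρ a * tstarWith star w) ∧ appRight ε0 w = 1

/-- The twisted coactions `(ρ, u)` and `(σ, v)` of `H0` on `A` are exterior equivalent:
there is a unitary `w ∈ A ⊗ H0` with `σ = Ad(w) ∘ ρ` and
`v = (w ⊗ 1)(ρ ⊗ id)(w) u (id ⊗ Δ0)(w*)`. -/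
def ExtEquivTwisted (Δ0 : H0 →ₗ[ℂ] H0 ⊗[ℂ] H0)
    (ρ : A →ₗ[ℂ] A ⊗[ℂ] H0) (u : (A ⊗[ℂ] H0) ⊗[ℂ] H0)
    (σ : A →ₗ[ℂ] A ⊗[ℂ] H0) (v : (A ⊗[ℂ] H0) ⊗[ℂ] H0) : Prop :=
  ∃ w : A ⊗[ℂ] H0, w * tstarWith star w = 1 ∧ tstarWith star w * w = 1 ∧
    (∀ a, σ a = w * ρ a * tstarWith star w) ∧
    v = (w ⊗ₜ (1 : H0)) * TensorProduct.map ρ LinearMap.id w * u *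
        (TensorProduct.assoc ℂ A H0 H0).symm
          (TensorProduct.map LinearMap.id Δ0 (tstarWith star w))

end ExtEquiv

/-! ### Helper lemmas -/

section Helpers
section Basics
variable {M C : Type*} [AddCommGroup M] [Module ℂ M] [AddCommGroup C] [Module ℂ C]
  [FiniteDimensional ℂ C]

lemma appRight_tmul (f : C →ₗ[ℂ] ℂ) (m : M) (c : C) :
    appRight f (m ⊗ₜ[ℂ] c) = f c • m := by
  simp [appRight]

lemma tcoord_tmul (i) (m : M) (c : C) :
    tcoord i (m ⊗ₜ[ℂ] c) = (Module.finBasis ℂ C).coord i c • m := by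
  simp [tcoord, appRight_tmul]

lemma texpand (t : M ⊗[ℂ] C) :
    ∑ i, tcoord i t ⊗ₜ[ℂ] (Module.finBasis ℂ C i) = t := by
  induction t with
  | zero => simp
  | tmul m c =>
      simp only [tcoord_tmul]
      calc ∑ i, ((Module.finBasis ℂ C).coord i c • m) ⊗ₜ[ℂ] (Module.finBasis ℂ C i)
          = ∑ i, m ⊗ₜ[ℂ] ((Module.finBasis ℂ C).coord i c • Module.finBasis ℂ C i) := by
            simp [TensorProduct.smul_tmul]
        _ = m ⊗ₜ[ℂ] ∑ i, (Module.finBasis ℂ C).coord i c • Module.finBasis ℂ C i := by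
            rw [TensorProduct.tmul_sum]
        _ = m ⊗ₜ[ℂ] c := by
            congr 1
            simpa using (Module.finBasis ℂ C).sum_repr c
  | add x y hx hy =>
      simp only [map_add, TensorProduct.add_tmul, Finset.sum_add_distrib, hx, hy]

end Basics


section StarLemmas
variable {M C : Type*} [AddCommGroup M] [Module ℂ M] [Ring C] [Algebra ℂ C]
  [StarRing C] [StarModule ℂ C] [FiniteDimensional ℂ C]

lemma tstarWith_tmul (sM : M → M)
    (hs : ∀ (r : ℂ) (x : M), sM (r • x) = (starRingEnd ℂ r) • sM x) (m : M) (c : C) :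
    tstarWith sM (m ⊗ₜ[ℂ] c) = sM m ⊗ₜ[ℂ] star c := by
  unfold tstarWith
  simp only [tcoord_tmul, hs]
  calc ∑ i, ((starRingEnd ℂ) ((Module.finBasis ℂ C).coord i c) • sM m) ⊗ₜ[ℂ]
        star (Module.finBasis ℂ C i)
      = ∑ i, sM m ⊗ₜ[ℂ] star ((Module.finBasis ℂ C).coord i c • Module.finBasis ℂ C i) := by
        refine Finset.sum_congr rfl fun i _ => ?_
        rw [star_smul, TensorProduct.smul_tmul]
        rfl
    _ = sM m ⊗ₜ[ℂ] star (∑ i, (Module.finBasis ℂ C).coord i c • Module.finBasis ℂ C i) := by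
        rw [star_sum, TensorProduct.tmul_sum]
    _ = sM m ⊗ₜ[ℂ] star c := by
        congr 2
        simpa using (Module.finBasis ℂ C).sum_repr c

lemma tstarWith_add (sM : M → M) (hadd : ∀ x y, sM (x + y) = sM x + sM y) (s t : M ⊗[ℂ] C) :
    tstarWith sM (s + t) = tstarWith sM s + tstarWith sM t := by
  unfold tstarWith
  simp only [map_add, hadd, TensorProduct.add_tmul, Finset.sum_add_distrib]

lemma tstarWith_smul (sM : M → M)
    (hs : ∀ (r : ℂ) (x : M), sM (r • x) = (starRingEnd ℂ r) • sM x) (r : ℂ) (t : M ⊗[ℂ] C) :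
    tstarWith sM (r • t) = (starRingEnd ℂ r) • tstarWith sM t := by
  unfold tstarWith
  simp only [map_smul, hs, TensorProduct.smul_tmul', Finset.smul_sum]

end StarLemmas

section StarRingLemmas
variable {M C : Type*} [Ring M] [Algebra ℂ M] [StarRing M] [StarModule ℂ M]
  [Ring C] [Algebra ℂ C] [StarRing C] [StarModule ℂ C] [FiniteDimensional ℂ C]

lemma tstar_tmul (m : M) (c : C) :
    tstarWith (star : M → M) (m ⊗ₜ[ℂ] c) = star m ⊗ₜ[ℂ] star c :=
  tstarWith_tmul _ (fun r x => by rw [star_smul]; rfl) m c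

lemma tstar_add (s t : M ⊗[ℂ] C) :
    tstarWith (star : M → M) (s + t) = tstarWith star s + tstarWith star t :=
  tstarWith_add _ (fun x y => star_add x y) s t

lemma tstar_zero : tstarWith (star : M → M) (0 : M ⊗[ℂ] C) = 0 := by
  unfold tstarWith; simp

lemma tstar_smul (r : ℂ) (t : M ⊗[ℂ] C) :
    tstarWith (star : M → M) (r • t) = (starRingEnd ℂ r) • tstarWith star t :=
  tstarWith_smul _ (fun r x => by rw [star_smul]; rfl) r t

lemma tstar_one : tstarWith (star : M → M) (1 : M ⊗[ℂ] C) = 1 := by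
  rw [Algebra.TensorProduct.one_def, tstar_tmul, star_one, star_one]

lemma tstar_mul (s t : M ⊗[ℂ] C) :
    tstarWith (star : M → M) (s * t) = tstarWith star t * tstarWith star s := by
  induction s with
  | zero => simp [tstar_zero]
  | add x y hx hy => simp [add_mul, tstar_add, hx, hy, mul_add]
  | tmul a h =>
      induction t with
      | zero => simp [tstar_zero]
      | add x y hx hy => simp [mul_add, tstar_add, hx, hy, add_mul]
      | tmul b k =>
          simp only [Algebra.TensorProduct.tmul_mul_tmul, tstar_tmul, star_mul]

lemma tstar_tstar (t : M ⊗[ℂ] C) :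
    tstarWith (star : M → M) (tstarWith (star : M → M) t) = t := by
  induction t with
  | zero => simp [tstar_zero]
  | add x y hx hy => simp [tstar_add, hx, hy]
  | tmul a h => simp [tstar_tmul]

end StarRingLemmas


section GenStarRingLemmas
variable {M C : Type*} [Ring M] [Algebra ℂ M]
  [Ring C] [Algebra ℂ C] [StarRing C] [StarModule ℂ C] [FiniteDimensional ℂ C]
variable (sM : M → M)
  (hadd : ∀ x y, sM (x + y) = sM x + sM y)
  (hs : ∀ (r : ℂ) (x : M), sM (r • x) = (starRingEnd ℂ r) • sM x)

include hadd in
lemma tstarWith_zero' : tstarWith sM (0 : M ⊗[ℂ] C) = 0 := by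
  have h0 : sM 0 = 0 := by
    have := hadd 0 0
    rw [add_zero] at this
    exact left_eq_add.mp this
  unfold tstarWith; simp [h0]

include hs in
lemma tstarWith_one' (h1 : sM 1 = 1) : tstarWith sM (1 : M ⊗[ℂ] C) = 1 := by
  rw [Algebra.TensorProduct.one_def, tstarWith_tmul sM hs, h1, star_one]

include hadd hs in
lemma tstarWith_mul' (hmul : ∀ x y, sM (x * y) = sM y * sM x) (s t : M ⊗[ℂ] C) :
    tstarWith sM (s * t) = tstarWith sM t * tstarWith sM s := by
  induction s with
  | zero => simp [tstarWith_zero' sM hadd]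
  | add x y hx hy => simp [add_mul, tstarWith_add sM hadd, hx, hy, mul_add]
  | tmul a h =>
      induction t with
      | zero => simp [tstarWith_zero' sM hadd]
      | add x y hx hy => simp [mul_add, tstarWith_add sM hadd, hx, hy, add_mul]
      | tmul b k =>
          simp only [Algebra.TensorProduct.tmul_mul_tmul, tstarWith_tmul sM hs, star_mul, hmul]

include hadd hs in
lemma tstarWith_invol' (hinv : ∀ x, sM (sM x) = x) (t : M ⊗[ℂ] C) :
    tstarWith sM (tstarWith sM t) = t := by
  induction t with
  | zero => simp [tstarWith_zero' sM hadd]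
  | add x y hx hy => simp [tstarWith_add sM hadd, hx, hy]
  | tmul a h => simp [tstarWith_tmul sM hs, hinv]

end GenStarRingLemmas

section Star2
variable {M C : Type*} [Ring M] [Algebra ℂ M] [StarRing M] [StarModule ℂ M]
  [Ring C] [Algebra ℂ C] [StarRing C] [StarModule ℂ C] [FiniteDimensional ℂ C]

lemma tstar2_tmul (s : M ⊗[ℂ] C) (c : C) :
    tstarWith (tstarWith (star : M → M)) (s ⊗ₜ[ℂ] c) = tstarWith star s ⊗ₜ[ℂ] star c :=
  tstarWith_tmul _ tstar_smul s c

lemma tstar2_add (s t : (M ⊗[ℂ] C) ⊗[ℂ] C) :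
    tstarWith (tstarWith (star : M → M)) (s + t)
      = tstarWith (tstarWith star) s + tstarWith (tstarWith star) t :=
  tstarWith_add _ tstar_add s t

lemma tstar2_one : tstarWith (tstarWith (star : M → M)) (1 : (M ⊗[ℂ] C) ⊗[ℂ] C) = 1 :=
  tstarWith_one' _ tstar_smul tstar_one

lemma tstar2_mul (s t : (M ⊗[ℂ] C) ⊗[ℂ] C) :
    tstarWith (tstarWith (star : M → M)) (s * t)
      = tstarWith (tstarWith star) t * tstarWith (tstarWith star) s :=
  tstarWith_mul' _ tstar_add tstar_smul tstar_mul s t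

lemma tstar2_tstar2 (t : (M ⊗[ℂ] C) ⊗[ℂ] C) :
    tstarWith (tstarWith (star : M → M)) (tstarWith (tstarWith star) t) = t :=
  tstarWith_invol' _ tstar_add tstar_smul tstar_tstar t

end Star2



section MixLemmas
variable {M C : Type*} [Ring M] [Algebra ℂ M]
  [Ring C] [Algebra ℂ C] [StarRing C] [StarModule ℂ C] [FiniteDimensional ℂ C]

lemma tact_mul_eq (s t : M ⊗[ℂ] C) : tact (fun x y : M => x * y) s t = s * t := by
  conv_rhs => rw [← texpand s, ← texpand t]
  rw [Finset.sum_mul_sum]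
  unfold tact tmix
  refine Finset.sum_congr rfl fun i _ => Finset.sum_congr rfl fun j _ => ?_
  rw [Algebra.TensorProduct.tmul_mul_tmul]

variable [StarRing M] [StarModule ℂ M]

lemma tinnL_eq (s t : M ⊗[ℂ] C) :
    tinnL (fun x y : M => x * star y) s t = s * tstarWith star t := by
  conv_rhs => rw [← texpand s]
  rw [show tstarWith (star : M → M) t
      = ∑ j, star (tcoord j t) ⊗ₜ[ℂ] star (Module.finBasis ℂ C j) from rfl]
  rw [Finset.sum_mul_sum]
  unfold tinnL tmix
  refine Finset.sum_congr rfl fun i _ => Finset.sum_congr rfl fun j _ => ?_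
  rw [Algebra.TensorProduct.tmul_mul_tmul]

lemma tinnR_eq (s t : M ⊗[ℂ] C) :
    tinnR (fun x y : M => star x * y) s t = tstarWith star s * t := by
  conv_rhs => rw [← texpand t]
  rw [show tstarWith (star : M → M) s
      = ∑ i, star (tcoord i s) ⊗ₜ[ℂ] star (Module.finBasis ℂ C i) from rfl]
  rw [Finset.sum_mul_sum]
  unfold tinnR tmix
  refine Finset.sum_congr rfl fun i _ => Finset.sum_congr rfl fun j _ => ?_
  rw [Algebra.TensorProduct.tmul_mul_tmul]

end MixLemmas



section Star2Zero
variable {M C : Type*} [Ring M] [Algebra ℂ M] [StarRing M] [StarModule ℂ M]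
  [Ring C] [Algebra ℂ C] [StarRing C] [StarModule ℂ C] [FiniteDimensional ℂ C]

lemma tstar2_zero : tstarWith (tstarWith (star : M → M)) (0 : (M ⊗[ℂ] C) ⊗[ℂ] C) = 0 :=
  tstarWith_zero' _ tstar_add

end Star2Zero

section AppRightAlg
variable {M N C : Type*} [Ring M] [Algebra ℂ M] [AddCommGroup N] [Module ℂ N]
  [Ring C] [Algebra ℂ C] [StarRing C] [StarModule ℂ C] [FiniteDimensional ℂ C]
variable (f : C →ₗ[ℂ] ℂ)

lemma appRight_mul (hf : ∀ c d, f (c * d) = f c * f d) (s t : M ⊗[ℂ] C) :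
    appRight f (s * t) = appRight f s * appRight f t := by
  induction s with
  | zero => simp
  | add x y hx hy => simp [add_mul, map_add, hx, hy]
  | tmul a h =>
    induction t with
    | zero => simp
    | add x y hx hy => simp [mul_add, map_add, hx, hy]
    | tmul b k =>
        simp only [Algebra.TensorProduct.tmul_mul_tmul, appRight_tmul, hf]
        rw [smul_mul_assoc, mul_smul_comm, smul_smul]

lemma appRight_one (h1 : f 1 = 1) : appRight f (1 : M ⊗[ℂ] C) = 1 := by
  rw [Algebra.TensorProduct.one_def, appRight_tmul, h1, one_smul]

lemma appRight_star [StarRing M] [StarModule ℂ M]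
    (hf : ∀ c, f (star c) = starRingEnd ℂ (f c)) (t : M ⊗[ℂ] C) :
    appRight f (tstarWith star t) = star (appRight f t) := by
  induction t with
  | zero => rw [tstar_zero, map_zero, star_zero]
  | add x y hx hy => simp [tstar_add, map_add, hx, hy]
  | tmul a c =>
      rw [tstar_tmul, appRight_tmul, appRight_tmul, hf, star_smul]
      rfl

variable {P : Type*} [AddCommGroup P] [Module ℂ P]

lemma appRight_mapId (g : N →ₗ[ℂ] P) (s : N ⊗[ℂ] C) :
    appRight f (TensorProduct.map g LinearMap.id s) = g (appRight f s) := by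
  induction s with
  | zero => simp
  | add x y hx hy => simp [map_add, hx, hy]
  | tmul a c => simp [appRight_tmul]

lemma appRight_assoc_symm (a : N) (d : C ⊗[ℂ] C) :
    appRight f ((TensorProduct.assoc ℂ N C C).symm (a ⊗ₜ[ℂ] d))
      = a ⊗ₜ[ℂ] appRight f d := by
  induction d with
  | zero => simp
  | add x y hx hy => simp only [TensorProduct.tmul_add, map_add, hx, hy]
  | tmul x y =>
      rw [TensorProduct.assoc_symm_tmul, appRight_tmul, appRight_tmul,
        TensorProduct.tmul_smul]

end AppRightAlg

section MapIdAlg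
variable {M N C : Type*} [Ring M] [Algebra ℂ M] [Ring N] [Algebra ℂ N]
  [Ring C] [Algebra ℂ C] [StarRing C] [StarModule ℂ C] [FiniteDimensional ℂ C]
variable (ρ : M →ₗ[ℂ] N)

lemma mapId_mul (h : ∀ a b, ρ (a * b) = ρ a * ρ b) (s t : M ⊗[ℂ] C) :
    TensorProduct.map ρ LinearMap.id (s * t)
      = TensorProduct.map ρ LinearMap.id s * TensorProduct.map ρ LinearMap.id t := by
  induction s with
  | zero => simp
  | add x y hx hy => simp [add_mul, map_add, hx, hy]
  | tmul a c =>
    induction t with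
    | zero => simp
    | add x y hx hy => simp [mul_add, map_add, hx, hy]
    | tmul b d => simp [Algebra.TensorProduct.tmul_mul_tmul, h]

lemma mapId_one (h1 : ρ 1 = 1) :
    TensorProduct.map ρ LinearMap.id (1 : M ⊗[ℂ] C) = 1 := by
  rw [Algebra.TensorProduct.one_def, TensorProduct.map_tmul, h1]
  rfl

lemma mapId_star [StarRing M] [StarModule ℂ M] (sN : N → N)
    (hadd : ∀ x y, sN (x + y) = sN x + sN y)
    (hs : ∀ (r : ℂ) (x : N), sN (r • x) = (starRingEnd ℂ r) • sN x)
    (h : ∀ a, ρ (star a) = sN (ρ a)) (s : M ⊗[ℂ] C) :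
    TensorProduct.map ρ LinearMap.id (tstarWith star s)
      = tstarWith sN (TensorProduct.map ρ LinearMap.id s) := by
  induction s with
  | zero => rw [tstar_zero, map_zero]; exact (tstarWith_zero' sN hadd).symm
  | add x y hx hy =>
      rw [tstar_add, map_add, map_add, hx, hy, tstarWith_add sN hadd]
  | tmul a c =>
      rw [tstar_tmul, TensorProduct.map_tmul, TensorProduct.map_tmul,
        tstarWith_tmul sN hs, h]
      rfl

lemma mapId_mulRight (w : N) (s : M ⊗[ℂ] C) :
    TensorProduct.map (LinearMap.mulRight ℂ w ∘ₗ ρ) LinearMap.id s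
      = TensorProduct.map ρ LinearMap.id s * (w ⊗ₜ[ℂ] (1 : C)) := by
  induction s with
  | zero => simp
  | add x y hx hy => simp [map_add, hx, hy, add_mul]
  | tmul a c =>
      simp only [TensorProduct.map_tmul, LinearMap.comp_apply,
        LinearMap.mulRight_apply, LinearMap.id_coe, id_eq,
        Algebra.TensorProduct.tmul_mul_tmul, mul_one]

end MapIdAlg

section DlLemmas
variable {H0 : Type u} [Ring H0] [Algebra ℂ H0] [StarRing H0] [StarModule ℂ H0]
  [FiniteDimensional ℂ H0]
variable {A : Type u} [Ring A] [Algebra ℂ A] [StarRing A] [StarModule ℂ A]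

/-- `(id ⊗ Δ0)` followed by the inverse associator, as a linear map. -/
def DL (hd : HopfAlgData H0) : A ⊗[ℂ] H0 →ₗ[ℂ] (A ⊗[ℂ] H0) ⊗[ℂ] H0 :=
  (TensorProduct.assoc ℂ A H0 H0).symm.toLinearMap
    ∘ₗ TensorProduct.map LinearMap.id hd.comul.toLinearMap

variable (hd : HopfAlgData H0)

lemma DL_apply (s : A ⊗[ℂ] H0) :
    DL hd s = (TensorProduct.assoc ℂ A H0 H0).symm
      (TensorProduct.map LinearMap.id hd.comul.toLinearMap s) := rfl

lemma DL_eq_algHom (s : A ⊗[ℂ] H0) :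
    DL hd s = ((Algebra.TensorProduct.assoc ℂ ℂ ℂ A H0 H0).symm.toAlgHom.comp
      (Algebra.TensorProduct.map (AlgHom.id ℂ A) hd.comul)) s := by
  induction s with
  | zero => simp
  | add x y hx hy => simp [map_add, hx, hy]
  | tmul a h => rfl

lemma DL_mul (s t : A ⊗[ℂ] H0) : DL hd (s * t) = DL hd s * DL hd t := by
  rw [DL_eq_algHom, DL_eq_algHom, DL_eq_algHom, map_mul]

lemma DL_one : DL hd (1 : A ⊗[ℂ] H0) = 1 := by
  rw [DL_eq_algHom, map_one]

lemma assoc_symm_tstar (a : A) (d : H0 ⊗[ℂ] H0) :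
    (TensorProduct.assoc ℂ A H0 H0).symm (star a ⊗ₜ[ℂ] tstarWith star d)
      = tstarWith (tstarWith star)
          ((TensorProduct.assoc ℂ A H0 H0).symm (a ⊗ₜ[ℂ] d)) := by
  induction d with
  | zero => rw [tstar_zero, TensorProduct.tmul_zero, map_zero]; exact tstar2_zero.symm
  | add x y hx hy =>
      rw [tstar_add, TensorProduct.tmul_add, TensorProduct.tmul_add, map_add,
        map_add, hx, hy, tstar2_add]
  | tmul x y =>
      rw [tstar_tmul, TensorProduct.assoc_symm_tmul, TensorProduct.assoc_symm_tmul,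
        tstar2_tmul, tstar_tmul]

lemma DL_star (s : A ⊗[ℂ] H0) :
    DL hd (tstarWith star s) = tstarWith (tstarWith star) (DL hd s) := by
  induction s with
  | zero => rw [tstar_zero, map_zero]; exact tstar2_zero.symm
  | add x y hx hy => rw [tstar_add, map_add, map_add, hx, hy, tstar2_add]
  | tmul a h =>
      have h1 : DL hd (star a ⊗ₜ[ℂ] star h)
          = (TensorProduct.assoc ℂ A H0 H0).symm
              (star a ⊗ₜ[ℂ] hd.comul.toLinearMap (star h)) := rfl
      have h2 : DL hd (a ⊗ₜ[ℂ] h)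
          = (TensorProduct.assoc ℂ A H0 H0).symm
              (a ⊗ₜ[ℂ] hd.comul.toLinearMap h) := rfl
      rw [tstar_tmul, h1, h2]
      have : hd.comul.toLinearMap (star h) = tstarWith star (hd.comul.toLinearMap h) :=
        hd.comul_star h
      rw [this, assoc_symm_tstar]

lemma DL_appRight (s : A ⊗[ℂ] H0) :
    appRight hd.counit.toLinearMap (DL hd s) = s := by
  induction s with
  | zero => simp
  | add x y hx hy => rw [map_add, map_add, hx, hy]
  | tmul a h =>
      have h2 : DL hd (a ⊗ₜ[ℂ] h)
          = (TensorProduct.assoc ℂ A H0 H0).symm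
              (a ⊗ₜ[ℂ] hd.comul.toLinearMap h) := rfl
      rw [h2, appRight_assoc_symm, AlgHom.toLinearMap_apply, hd.counit_right]

end DlLemmas

section MonoidHelper
lemma mul_cancel_left {R : Type*} [Monoid R] {a b : R} (h : a * b = 1) (c : R) :
    a * (b * c) = c := by rw [← mul_assoc, h, one_mul]
end MonoidHelper

end Helpers

/-- Let `(ρ,u)` and `(σ,v)` be twisted coactions of `H0` on a unital
C*-algebra `A`.  The following are equivalent: (1) `(ρ,u)` and `(σ,v)` are exterior
equivalent, i.e. there is a unitary `w ∈ A ⊗ H0` with `σ = Ad(w) ∘ ρ` and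
`v = (w ⊗ 1)(ρ ⊗ id)(w) · u · (id ⊗ Δ0)(w*)`; (2) `(ρ,u)` and `(σ,v)` are strongly Morita
equivalent via a twisted coaction `λ` of `H0` on the `A`–`A` equivalence bimodule `A` itself
(with `_A⟨a,b⟩ = ab*`, `⟨a,b⟩_A = a*b`), `λ` mapping `A` into the
`(A ⊗ H0)`–`(A ⊗ H0)` equivalence bimodule `A ⊗ H0`. -/
theorem extEquivTwisted_iff_strongMorita_idBimod
    {H0 : Type u} [CStarAlgebra H0] [StarModule ℂ H0] [FiniteDimensional ℂ H0]
    {A : Type u} [CStarAlgebra A] [StarModule ℂ A]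
    (hd : HopfAlgData H0)
    (ρ : A →ₗ[ℂ] A ⊗[ℂ] H0) (u : (A ⊗[ℂ] H0) ⊗[ℂ] H0)
    (σ : A →ₗ[ℂ] A ⊗[ℂ] H0) (v : (A ⊗[ℂ] H0) ⊗[ℂ] H0)
    (hρu : IsTwistedCoaction hd.comul.toLinearMap hd.counit.toLinearMap ρ u)
    (hσv : IsTwistedCoaction hd.comul.toLinearMap hd.counit.toLinearMap σ v) :
    ExtEquivTwisted hd.comul.toLinearMap ρ u σ v ↔
      ∃ lam : A →ₗ[ℂ] A ⊗[ℂ] H0,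
        IsTwistedCoactionBimod hd.comul.toLinearMap hd.counit.toLinearMap
          (idBimod A) ρ u σ v lam := by
  have hεmul : ∀ c d : H0, hd.counit.toLinearMap (c * d)
      = hd.counit.toLinearMap c * hd.counit.toLinearMap d := fun c d => map_mul hd.counit c d
  have hεone : hd.counit.toLinearMap (1 : H0) = 1 := map_one hd.counit
  have hεstar : ∀ c : H0, hd.counit.toLinearMap (star c)
      = starRingEnd ℂ (hd.counit.toLinearMap c) := hd.counit_star
  have hls : (idBimod A).ls = fun x y : A => x * y := rfl
  have hrs : (idBimod A).rs = fun x y : A => x * y := rfl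
  have hlinn : (idBimod A).linn = fun x y : A => x * star y := rfl
  have hrinn : (idBimod A).rinn = fun x y : A => star x * y := rfl
  have htact1 : ∀ s t : A ⊗[ℂ] H0, tact (idBimod A).ls s t = s * t := by
    intro s t; rw [hls]; exact tact_mul_eq s t
  have htact1' : ∀ s t : A ⊗[ℂ] H0, tact (idBimod A).rs s t = s * t := by
    intro s t; rw [hrs]; exact tact_mul_eq s t
  have hfunls : (tact (idBimod A).ls : A ⊗[ℂ] H0 → A ⊗[ℂ] H0 → A ⊗[ℂ] H0)
      = fun s t => s * t := funext fun s => funext fun t => htact1 s t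
  have hfunrs : (tact (idBimod A).rs : A ⊗[ℂ] H0 → A ⊗[ℂ] H0 → A ⊗[ℂ] H0)
      = fun s t => s * t := funext fun s => funext fun t => htact1' s t
  have htact2 : ∀ s t : (A ⊗[ℂ] H0) ⊗[ℂ] H0, tact (tact (idBimod A).ls) s t = s * t := by
    intro s t; rw [hfunls]; exact tact_mul_eq s t
  have htact2' : ∀ s t : (A ⊗[ℂ] H0) ⊗[ℂ] H0, tact (tact (idBimod A).rs) s t = s * t := by
    intro s t; rw [hfunrs]; exact tact_mul_eq s t
  have htinnL : ∀ s t : A ⊗[ℂ] H0, tinnL (idBimod A).linn s t = s * tstarWith star t := by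
    intro s t; rw [hlinn]; exact tinnL_eq s t
  have htinnR : ∀ s t : A ⊗[ℂ] H0, tinnR (idBimod A).rinn s t = tstarWith star s * t := by
    intro s t; rw [hrinn]; exact tinnR_eq s t
  have hDL : ∀ s : A ⊗[ℂ] H0, (TensorProduct.assoc ℂ A H0 H0).symm
      (TensorProduct.map LinearMap.id hd.comul.toLinearMap s) = DL hd s := fun _ => rfl
  have hρm := hρu.toIsWeakCoaction.map_mul
  have hρs := hρu.toIsWeakCoaction.map_star
  have hρε := hρu.toIsWeakCoaction.counital
  constructor
  · -- forward direction
    rintro ⟨w, hw1, hw2, hσ, hv⟩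
    rw [hDL] at hv
    -- the counit of w is 1
    have he1 : appRight hd.counit.toLinearMap w
        * star (appRight hd.counit.toLinearMap w) = 1 := by
      have h := hσv.toIsWeakCoaction.counital 1
      rw [hσ 1, appRight_mul _ hεmul, appRight_mul _ hεmul,
        appRight_star _ hεstar, hρε 1, mul_one] at h
      exact h
    have hemain : appRight hd.counit.toLinearMap w = 1 := by
      have hu1 : appRight hd.counit.toLinearMap
          (appRight hd.counit.toLinearMap u) = 1 := by
        have h := hρu.counit_mid hd.counit.toLinearMap
        rw [hεone, one_smul] at h; exact h
      have hL : appRight hd.counit.toLinearMap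
          (appRight hd.counit.toLinearMap v) = 1 := by
        have h := hσv.counit_mid hd.counit.toLinearMap
        rw [hεone, one_smul] at h; exact h
      have hv1 : appRight hd.counit.toLinearMap v
          = w * ρ (appRight hd.counit.toLinearMap w)
            * appRight hd.counit.toLinearMap u * tstarWith star w := by
        rw [hv, appRight_mul _ hεmul, appRight_mul _ hεmul, appRight_mul _ hεmul,
          appRight_tmul, hεone, one_smul, appRight_mapId, DL_appRight]
      rw [hv1, appRight_mul _ hεmul, appRight_mul _ hεmul, appRight_mul _ hεmul,
        hρε, hu1, mul_one, appRight_star _ hεstar] at hL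
      calc appRight hd.counit.toLinearMap w
          = appRight hd.counit.toLinearMap w
            * (appRight hd.counit.toLinearMap w
              * star (appRight hd.counit.toLinearMap w)) := by rw [he1, mul_one]
        _ = appRight hd.counit.toLinearMap w * appRight hd.counit.toLinearMap w
            * star (appRight hd.counit.toLinearMap w) := by rw [mul_assoc]
        _ = 1 := hL
    refine ⟨LinearMap.mulRight ℂ (tstarWith star w) ∘ₗ ρ, ⟨?_, ?_, ?_, ?_, ?_⟩, ?_⟩
    · -- ls_compat
      intro a x
      rw [htact1]
      show ρ ((idBimod A).ls a x) * tstarWith star w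
        = ρ a * ((LinearMap.mulRight ℂ (tstarWith star w) ∘ₗ ρ) x)
      show ρ (a * x) * tstarWith star w = ρ a * (ρ x * tstarWith star w)
      rw [hρm, mul_assoc]
    · -- rs_compat
      intro x b
      rw [htact1']
      show ρ (x * b) * tstarWith star w
        = ρ x * tstarWith star w * σ b
      rw [hσ b, hρm]
      rw [mul_assoc (ρ x) (tstarWith star w), mul_assoc w (ρ b),
        mul_cancel_left hw2, mul_assoc]
    · -- linn_compat
      intro x y
      rw [htinnL]
      show ρ ((idBimod A).linn x y)
        = ρ x * tstarWith star w * tstarWith star (ρ y * tstarWith star w)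
      show ρ (x * star y)
        = ρ x * tstarWith star w * tstarWith star (ρ y * tstarWith star w)
      rw [hρm, hρs y, tstar_mul, tstar_tstar, mul_assoc (ρ x) (tstarWith star w),
        mul_cancel_left hw2]
    · -- rinn_compat
      intro x y
      rw [htinnR]
      show σ ((idBimod A).rinn x y)
        = tstarWith star (ρ x * tstarWith star w) * (ρ y * tstarWith star w)
      show σ (star x * y)
        = tstarWith star (ρ x * tstarWith star w) * (ρ y * tstarWith star w)
      rw [hσ, hρm, hρs x, tstar_mul, tstar_tstar]
      simp only [mul_assoc]
    · -- counital
      intro x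
      show appRight hd.counit.toLinearMap (ρ x * tstarWith star w) = x
      rw [appRight_mul _ hεmul, hρε, appRight_star _ hεstar, hemain, star_one, mul_one]
    · -- twisted
      intro x
      rw [htact2', htact2, hDL]
      have hlamx : (LinearMap.mulRight ℂ (tstarWith star w) ∘ₗ ρ) x
          = ρ x * tstarWith star w := rfl
      rw [hlamx, mapId_mulRight ρ (tstarWith star w), mapId_mul ρ hρm]
      have htc := hρu.twisted_coassoc x
      rw [hDL] at htc
      rw [htc]
      rw [DL_mul]
      have hS2v : tstarWith (tstarWith (star : A → A)) v
          = DL hd w * (tstarWith (tstarWith star) u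
            * (TensorProduct.map ρ LinearMap.id (tstarWith star w)
              * (tstarWith star w ⊗ₜ (1 : H0)))) := by
        rw [hv, tstar2_mul, tstar2_mul, tstar2_mul, DL_star, tstar2_tstar2,
          tstar2_tmul, star_one,
          ← mapId_star ρ (tstarWith star) tstar_add tstar_smul hρs]
      rw [hS2v]
      have hcan : DL hd (tstarWith star w) * (DL hd w * (tstarWith (tstarWith star) u
            * (TensorProduct.map ρ LinearMap.id (tstarWith star w)
              * (tstarWith star w ⊗ₜ (1 : H0)))))
          = tstarWith (tstarWith star) u
            * (TensorProduct.map ρ LinearMap.id (tstarWith star w)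
              * (tstarWith star w ⊗ₜ (1 : H0))) := by
        rw [← mul_assoc, ← DL_mul, hw2, DL_one, one_mul]
      simp only [mul_assoc]
      rw [hcan]
  · -- reverse direction
    rintro ⟨lam, hl⟩
    have hB := hl.toIsWeakCoactionBimod
    have hw1 : lam 1 * tstarWith star (lam 1) = 1 := by
      have h := hB.linn_compat 1 1
      rw [htinnL] at h
      have h0 : (idBimod A).linn 1 1 = 1 := by
        show (1 : A) * star 1 = 1; rw [star_one, mul_one]
      rw [h0, hρu.toIsWeakCoaction.map_one] at h
      exact h.symm
    have hw2 : tstarWith star (lam 1) * lam 1 = 1 := by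
      have h := hB.rinn_compat 1 1
      rw [htinnR] at h
      have h0 : (idBimod A).rinn 1 1 = 1 := by
        show star (1 : A) * 1 = 1; rw [star_one, mul_one]
      rw [h0, hσv.toIsWeakCoaction.map_one] at h
      exact h.symm
    have hlaml : ∀ a : A, lam a = ρ a * lam 1 := by
      intro a
      have h := hB.ls_compat a 1
      rw [htact1] at h
      have h0 : (idBimod A).ls a 1 = a := mul_one a
      rw [h0] at h
      exact h
    have hlamr : ∀ b : A, lam b = lam 1 * σ b := by
      intro b
      have h := hB.rs_compat 1 b
      rw [htact1'] at h
      have h0 : (idBimod A).rs 1 b = b := one_mul b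
      rw [h0] at h
      exact h
    refine ⟨tstarWith star (lam 1), ?_, ?_, ?_, ?_⟩
    · rw [tstar_tstar]; exact hw2
    · rw [tstar_tstar]; exact hw1
    · intro a
      rw [tstar_tstar]
      calc σ a = tstarWith star (lam 1) * lam 1 * σ a := by rw [hw2, one_mul]
        _ = tstarWith star (lam 1) * (lam 1 * σ a) := mul_assoc _ _ _
        _ = tstarWith star (lam 1) * lam a := by rw [← hlamr a]
        _ = tstarWith star (lam 1) * (ρ a * lam 1) := by rw [hlaml a]
        _ = tstarWith star (lam 1) * ρ a * lam 1 := (mul_assoc _ _ _).symm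
    · rw [hDL, tstar_tstar]
      have hmap : ∀ s : A ⊗[ℂ] H0, TensorProduct.map lam LinearMap.id s
          = TensorProduct.map ρ LinearMap.id s * (lam 1 ⊗ₜ (1 : H0)) := by
        intro s
        induction s with
        | zero => simp
        | add x y hx hy => simp [map_add, hx, hy, add_mul]
        | tmul a c =>
            rw [TensorProduct.map_tmul, TensorProduct.map_tmul, hlaml a,
              Algebra.TensorProduct.tmul_mul_tmul, mul_one]
      have ht := hl.twisted 1
      rw [htact2', htact2, hDL, hmap] at ht
      have ht' : TensorProduct.map ρ LinearMap.id (lam 1) * (lam 1 ⊗ₜ (1 : H0))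
          = u * (DL hd (lam 1) * tstarWith (tstarWith star) v) := by
        rw [← mul_assoc, ← ht]
      have hS2v : tstarWith (tstarWith (star : A → A)) v
          = DL hd (tstarWith star (lam 1)) * (tstarWith (tstarWith star) u
            * (TensorProduct.map ρ LinearMap.id (lam 1) * (lam 1 ⊗ₜ (1 : H0)))) := by
        rw [ht', mul_cancel_left hρu.unitary_right, ← mul_assoc, ← DL_mul, hw2,
          DL_one, one_mul]
      have hv' := congrArg (tstarWith (tstarWith (star : A → A))) hS2v
      rw [tstar2_tstar2, tstar2_mul, tstar2_mul, tstar2_mul, tstar2_tstar2,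
        tstar2_tmul, star_one, DL_star, tstar2_tstar2,
        ← mapId_star ρ (tstarWith star) tstar_add tstar_smul hρs] at hv'
      rw [hv']

end SMEPaper
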